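/- Let H = ℂ((X)) be the field of formal Laurent series with its X-adic (valuation) topology, and let π₊ : H → H and π₋ : H → H be the ℂ-linear projections onto the nonnegative-power part ℂ[[X]] and the negative-power part X^{−1}ℂ[X^{−1}], respectively. For continuous ℂ-linear endomorphisms F, G of H, define η(F,G) := Σ_{k<0} [ (coefficient of X^k in (π₋ ∘ F ∘ π₊ ∘ G)(X^k)) − (coefficient of X^k in (π₋ ∘ G ∘ π₊ ∘ F)(X^k)) ]. Then: (a) for all continuous F, G the displayed family over k < 0 is finitely supported, so η(F,G) is a well-defined complex number; and (b) η is a 2-cocycle on the Lie algebra of continuous ℂ-linear endomorphisms of H: η(F,G) = −η(G,F) and η([F,G], E) + η([G,E], F) + η([E,F], G) = 0 for all continuous F, G, E, where [F,G] = F ∘ G − G ∘ F. Consequently the bracket [F,G]~ := [F,G] + η(F,G)·C defines a Lie algebra structure on 𝔤𝔩 ⊕ ℂC (the central extension of the semi-infinite general linear algebra). -/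
import Mathlib


/-- The field of formal Laurent series `H = ℂ((X))`, modeled as the space of functions
`ℤ → ℂ` whose support is bounded below (the coefficient functions of Laurent series). -/
noncomputable def LaurentSp : Submodule ℂ (ℤ → ℂ) where
  carrier := {f | ∃ N : ℤ, ∀ k < N, f k = 0}
  zero_mem' := ⟨0, fun _ _ => rfl⟩
  add_mem' := by
    rintro f g ⟨N₁, h₁⟩ ⟨N₂, h₂⟩
    exact ⟨min N₁ N₂, fun k hk => by
      simp [h₁ k (lt_of_lt_of_le hk (min_le_left _ _)),
        h₂ k (lt_of_lt_of_le hk (min_le_right _ _))]⟩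
  smul_mem' := by
    rintro c f ⟨N, h⟩
    exact ⟨N, fun k hk => by simp [h k hk]⟩

/-- The monomial `X^k ∈ ℂ((X))`. -/
noncomputable def lX (k : ℤ) : LaurentSp :=
  ⟨fun i => if i = k then 1 else 0, ⟨k, fun i hi => if_neg (ne_of_lt hi)⟩⟩

/-- The coefficientwise projection onto nonnegative powers, on the ambient space. -/
noncomputable def ambPiPlus : (ℤ → ℂ) →ₗ[ℂ] (ℤ → ℂ) where
  toFun f := fun k => if 0 ≤ k then f k else 0
  map_add' f g := by funext k; by_cases h : 0 ≤ k <;> simp [h]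
  map_smul' c f := by funext k; by_cases h : 0 ≤ k <;> simp [h]

/-- The coefficientwise projection onto negative powers, on the ambient space. -/
noncomputable def ambPiMinus : (ℤ → ℂ) →ₗ[ℂ] (ℤ → ℂ) where
  toFun f := fun k => if k < 0 then f k else 0
  map_add' f g := by funext k; by_cases h : k < 0 <;> simp [h]
  map_smul' c f := by funext k; by_cases h : k < 0 <;> simp [h]

/-- The projection `π₊ : H → H` onto the nonnegative-power part `ℂ[[X]]`. -/
noncomputable def lPiPlus : LaurentSp →ₗ[ℂ] LaurentSp :=
  ambPiPlus.restrict (p := LaurentSp) (q := LaurentSp) (by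
    rintro f ⟨N, hN⟩
    refine ⟨N, fun k hk => ?_⟩
    by_cases h : 0 ≤ k <;> simp [ambPiPlus, h, hN k hk])

/-- The projection `π₋ : H → H` onto the negative-power part `X⁻¹ℂ[X⁻¹]`. -/
noncomputable def lPiMinus : LaurentSp →ₗ[ℂ] LaurentSp :=
  ambPiMinus.restrict (p := LaurentSp) (q := LaurentSp) (by
    rintro f ⟨N, hN⟩
    refine ⟨N, fun k hk => ?_⟩
    by_cases h : k < 0 <;> simp [ambPiMinus, h, hN k hk])

/-- A `ℂ`-linear endomorphism of `H = ℂ((X))` is continuous for the `X`-adic (valuation)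
topology iff it is continuous at `0`, i.e. for every basic neighborhood `X^N ℂ[[X]]` of `0`
there is a basic neighborhood `X^M ℂ[[X]]` mapped into it. -/
def XadicContinuous (F : LaurentSp →ₗ[ℂ] LaurentSp) : Prop :=
  ∀ N : ℤ, ∃ M : ℤ, ∀ f : LaurentSp,
    (∀ k < M, (f : ℤ → ℂ) k = 0) → ∀ k < N, ((F f : LaurentSp) : ℤ → ℂ) k = 0

/-- The `k`-th summand (for `k < 0`) of the Japanese cocycle
`η(F,G) = tr(F^{−+}G^{+−} − G^{−+}F^{+−})`: the coefficient of `X^k` in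
`(π₋ ∘ F ∘ π₊ ∘ G)(X^k) − (π₋ ∘ G ∘ π₊ ∘ F)(X^k)`. -/
noncomputable def japSummand (F G : LaurentSp →ₗ[ℂ] LaurentSp) (k : ℤ) : ℂ :=
  if k < 0 then
    (((lPiMinus ∘ₗ F ∘ₗ lPiPlus ∘ₗ G) (lX k) : LaurentSp) : ℤ → ℂ) k -
      (((lPiMinus ∘ₗ G ∘ₗ lPiPlus ∘ₗ F) (lX k) : LaurentSp) : ℤ → ℂ) k
  else 0

/-- The Japanese cocycle `η(F,G)`. -/
noncomputable def jap (F G : LaurentSp →ₗ[ℂ] LaurentSp) : ℂ :=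
  ∑ᶠ k : ℤ, japSummand F G k

/-- The bracket `[(F,a),(G,b)]~ = ([F,G], η(F,G))` on `𝔤𝔩 ⊕ ℂC`, defining the central
extension of the semi-infinite general linear algebra. -/
noncomputable def glTildeBracket (p q : (LaurentSp →ₗ[ℂ] LaurentSp) × ℂ) :
    (LaurentSp →ₗ[ℂ] LaurentSp) × ℂ :=
  (p.1 ∘ₗ q.1 - q.1 ∘ₗ p.1, jap p.1 q.1)

namespace JapAux

open Finset

/-- Coefficient of a Laurent series. -/
noncomputable def coef (f : LaurentSp) (i : ℤ) : ℂ := (f : ℤ → ℂ) i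

/-- Matrix entry of an endomorphism. -/
noncomputable def ent (F : LaurentSp →ₗ[ℂ] LaurentSp) (i k : ℤ) : ℂ := coef (F (lX k)) i

/-- Coefficient as a linear map. -/
noncomputable def coefL (i : ℤ) : LaurentSp →ₗ[ℂ] ℂ :=
  (LinearMap.proj i).comp LaurentSp.subtype

lemma coefL_apply (f : LaurentSp) (i : ℤ) : coefL i f = coef f i := rfl

lemma coef_lX (k i : ℤ) : coef (lX k) i = if i = k then 1 else 0 := rfl

lemma coef_sub (f g : LaurentSp) (i : ℤ) : coef (f - g) i = coef f i - coef g i := rfl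

lemma coef_piPlus (f : LaurentSp) (i : ℤ) :
    coef (lPiPlus f) i = if 0 ≤ i then coef f i else 0 := rfl

lemma coef_piMinus (f : LaurentSp) (i : ℤ) :
    coef (lPiMinus f) i = if i < 0 then coef f i else 0 := rfl

/-- continuity is closed under composition -/
lemma xc_comp {F G : LaurentSp →ₗ[ℂ] LaurentSp} (hF : XadicContinuous F)
    (hG : XadicContinuous G) : XadicContinuous (F ∘ₗ G) := by
  intro N
  obtain ⟨M1, h1⟩ := hF N
  obtain ⟨M2, h2⟩ := hG M1
  exact ⟨M2, fun f hf k hk => h1 (G f) (h2 f hf) k hk⟩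

/-- continuity is closed under subtraction -/
lemma xc_sub {F G : LaurentSp →ₗ[ℂ] LaurentSp} (hF : XadicContinuous F)
    (hG : XadicContinuous G) : XadicContinuous (F - G) := by
  intro N
  obtain ⟨M1, h1⟩ := hF N
  obtain ⟨M2, h2⟩ := hG N
  refine ⟨max M1 M2, fun f hf k hk => ?_⟩
  have : (((F - G) f : LaurentSp) : ℤ → ℂ) k
      = ((F f : LaurentSp) : ℤ → ℂ) k - ((G f : LaurentSp) : ℤ → ℂ) k := rfl
  rw [this, h1 f (fun j hj => hf j (lt_of_lt_of_le hj (le_max_left _ _))) k hk,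
    h2 f (fun j hj => hf j (lt_of_lt_of_le hj (le_max_right _ _))) k hk, sub_zero]

/-- Truncation/expansion lemma: the action of a continuous operator on a series supported
in `[L, ∞)`, in rows `< Nrow`, is given by the finite sum over columns `[L, M')`. -/
lemma expand (F : LaurentSp →ₗ[ℂ] LaurentSp) (hF : XadicContinuous F) (Nrow : ℤ) :
    ∃ M0 : ℤ, (∀ i < Nrow, ∀ m : ℤ, M0 ≤ m → ent F i m = 0) ∧
      ∀ L M' : ℤ, M0 ≤ M' → L ≤ M' → ∀ f : LaurentSp, (∀ j < L, coef f j = 0) →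
        ∀ i < Nrow, coef (F f) i = ∑ m ∈ Finset.Ico L M', coef f m * ent F i m := by
  obtain ⟨M0, hM0⟩ := hF Nrow
  refine ⟨M0, ?_, ?_⟩
  · intro i hi m hm
    exact hM0 (lX m) (fun j hj => if_neg (by omega)) i hi
  · intro L M' hM0M hLM f hf i hi
    set s : LaurentSp := ∑ m ∈ Finset.Ico L M', coef f m • lX m with hs
    have hcoefs : ∀ a : ℤ, coef s a = if a ∈ Finset.Ico L M' then coef f a else 0 := by
      intro a
      rw [← coefL_apply, hs, map_sum]
      have : ∀ m ∈ Finset.Ico L M', coefL a (coef f m • lX m)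
          = if a = m then coef f m else 0 := by
        intro m _
        rw [map_smul]
        simp only [smul_eq_mul, coefL_apply, coef_lX]
        split_ifs <;> ring
      rw [Finset.sum_congr rfl this, Finset.sum_ite_eq]
    have hg : ∀ j < M', coef (f - s) j = 0 := by
      intro j hj
      rw [coef_sub, hcoefs]
      by_cases h : j ∈ Finset.Ico L M'
      · rw [if_pos h]; ring
      · rw [if_neg h, hf j (by simpa [Finset.mem_Ico, hj] using h), sub_zero]
    have h0 : coef (F (f - s)) i = 0 :=
      hM0 (f - s) (fun j hj => hg j (lt_of_lt_of_le hj hM0M)) i hi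
    have hfs : F f = F (f - s) + F s := by rw [← map_add, sub_add_cancel]
    have hFs : coef (F s) i = ∑ m ∈ Finset.Ico L M', coef f m * ent F i m := by
      rw [← coefL_apply, hs, map_sum, map_sum]
      refine Finset.sum_congr rfl fun m _ => ?_
      rw [map_smul, map_smul]
      simp only [smul_eq_mul, coefL_apply, ent]
    have : coef (F f) i = coef (F (f - s)) i + coef (F s) i := by
      rw [hfs]; rfl
    rw [this, h0, zero_add, hFs]

/-- Column lower bounds, uniformly over a finite set of columns. -/
lemma colBound (X : LaurentSp →ₗ[ℂ] LaurentSp) (s : Finset ℤ) :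
    ∃ N : ℤ, N ≤ 0 ∧ ∀ c ∈ s, ∀ r < N, ent X r c = 0 := by
  classical
  induction s using Finset.induction_on with
  | empty => exact ⟨0, le_refl 0, by simp⟩
  | @insert a s _ ih =>
    obtain ⟨N, hN0, hN⟩ := ih
    obtain ⟨Na, hNa⟩ := (X (lX a)).2
    refine ⟨min N (min Na 0), by omega, ?_⟩
    intro c hc r hr
    rcases Finset.mem_insert.1 hc with rfl | hc
    · exact hNa r (by omega)
    · exact hN c hc r (by omega)

end JapAux
namespace JapAux

open Finset

/-- The basic formula for the summands of the Japanese cocycle. -/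
lemma japSummand_eq (A B : LaurentSp →ₗ[ℂ] LaurentSp) (hA : XadicContinuous A)
    (hB : XadicContinuous B) :
    ∃ M0 : ℤ, 0 ≤ M0 ∧ ∀ M', M0 ≤ M' → ∀ k < 0,
      japSummand A B k
        = ∑ j ∈ Finset.Ico (0:ℤ) M', (ent B j k * ent A k j - ent A j k * ent B k j) := by
  obtain ⟨MA, hAv, hAe⟩ := expand A hA 0
  obtain ⟨MB, hBv, hBe⟩ := expand B hB 0
  refine ⟨max 0 (max MA MB), le_max_left _ _, ?_⟩
  intro M' hM' k hk
  have hM'0 : (0:ℤ) ≤ M' := le_trans (le_max_left _ _) hM'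
  have hMA' : MA ≤ M' := le_trans (le_trans (le_max_left _ _) (le_max_right 0 _)) hM'
  have hMB' : MB ≤ M' := le_trans (le_trans (le_max_right _ _) (le_max_right 0 _)) hM'
  have key : ∀ (X Y : LaurentSp →ₗ[ℂ] LaurentSp), ∀ MX, MX ≤ M' →
      (∀ L M'' : ℤ, MX ≤ M'' → L ≤ M'' → ∀ f : LaurentSp, (∀ j < L, coef f j = 0) →
        ∀ i < (0:ℤ), coef (X f) i = ∑ m ∈ Finset.Ico L M'', coef f m * ent X i m) →
      (((lPiMinus ∘ₗ X ∘ₗ lPiPlus ∘ₗ Y) (lX k) : LaurentSp) : ℤ → ℂ) k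
        = ∑ j ∈ Finset.Ico (0:ℤ) M', ent Y j k * ent X k j := by
    intro X Y MX hMX hXe
    have h1 : (lPiMinus ∘ₗ X ∘ₗ lPiPlus ∘ₗ Y) (lX k) = lPiMinus (X (lPiPlus (Y (lX k)))) := rfl
    have h2 : (((lPiMinus (X (lPiPlus (Y (lX k))))) : LaurentSp) : ℤ → ℂ) k
        = coef (X (lPiPlus (Y (lX k)))) k := by
      rw [show ((lPiMinus (X (lPiPlus (Y (lX k)))) : LaurentSp) : ℤ → ℂ) k
        = coef (lPiMinus (X (lPiPlus (Y (lX k))))) k from rfl, coef_piMinus, if_pos hk]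
    rw [h1, h2]
    have hf : ∀ j < (0:ℤ), coef (lPiPlus (Y (lX k))) j = 0 := by
      intro j hj; rw [coef_piPlus, if_neg (not_le.2 hj)]
    rw [hXe 0 M' hMX hM'0 _ hf k hk]
    refine Finset.sum_congr rfl fun j hj => ?_
    rw [coef_piPlus, if_pos (Finset.mem_Ico.1 hj).1]
    rfl
  have t1 := key A B MA hMA' hAe
  have t2 := key B A MB hMB' hBe
  rw [japSummand, if_pos hk, t1, t2, ← Finset.sum_sub_distrib]

/-- `jap` as an explicit double sum. -/
lemma jap_eq (A B : LaurentSp →ₗ[ℂ] LaurentSp) {N M' : ℤ} (hN0 : N ≤ 0)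
    (hform : ∀ k < 0, japSummand A B k
      = ∑ j ∈ Finset.Ico (0:ℤ) M', (ent B j k * ent A k j - ent A j k * ent B k j))
    (hcol : ∀ k < N, ∀ j ∈ Finset.Ico (0:ℤ) M', ent A k j = 0 ∧ ent B k j = 0) :
    jap A B = ∑ k ∈ Finset.Ico N 0, ∑ j ∈ Finset.Ico (0:ℤ) M',
      (ent B j k * ent A k j - ent A j k * ent B k j) := by
  have hsupp : Function.support (japSummand A B) ⊆ ↑(Finset.Ico N 0) := by
    intro k hk
    simp only [Finset.coe_Ico, Set.mem_Ico]
    by_contra hc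
    push_neg at hc
    apply hk
    rcases lt_or_ge k 0 with h | h
    · have hkN : k < N := lt_of_not_ge fun hle => absurd (hc hle) (not_le.2 h)
      rw [hform k h]
      refine Finset.sum_eq_zero fun j hj => ?_
      obtain ⟨h1, h2⟩ := hcol k hkN j hj
      rw [h1, h2]; ring
    · exact if_neg (not_lt.2 h)
  rw [jap, finsum_eq_sum_of_support_subset _ hsupp]
  exact Finset.sum_congr rfl fun k hk => hform k (Finset.mem_Ico.1 hk).2

/-- Triple sums. -/
noncomputable def S3 (A B C : Finset ℤ) (f : ℤ → ℤ → ℤ → ℂ) : ℂ :=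
  ∑ k ∈ A, ∑ j ∈ B, ∑ m ∈ C, f k j m

lemma S3_swap13 (A B : Finset ℤ) (f : ℤ → ℤ → ℤ → ℂ) :
    S3 A B A f = S3 A B A (fun k j m => f m j k) := by
  calc S3 A B A f = ∑ k ∈ A, ∑ m ∈ A, ∑ j ∈ B, f k j m :=
        Finset.sum_congr rfl (fun k _ => Finset.sum_comm)
    _ = ∑ m ∈ A, ∑ k ∈ A, ∑ j ∈ B, f k j m := Finset.sum_comm
    _ = ∑ k ∈ A, ∑ j ∈ B, ∑ m ∈ A, f m j k :=
        Finset.sum_congr rfl (fun k _ => Finset.sum_comm)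

lemma S3_swap23 (A B : Finset ℤ) (f : ℤ → ℤ → ℤ → ℂ) :
    S3 A B B f = S3 A B B (fun k j m => f k m j) :=
  Finset.sum_congr rfl fun k _ => Finset.sum_comm

lemma S3_ext1 {A A' : Finset ℤ} (B C : Finset ℤ) (f : ℤ → ℤ → ℤ → ℂ) (hs : A ⊆ A')
    (h0 : ∀ k ∈ A', k ∉ A → ∀ j ∈ B, ∀ m ∈ C, f k j m = 0) : S3 A B C f = S3 A' B C f :=
  Finset.sum_subset hs fun k hk hk' =>
    Finset.sum_eq_zero fun j hj => Finset.sum_eq_zero fun m hm => h0 k hk hk' j hj m hm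

lemma S3_ext2 (A : Finset ℤ) {B B' : Finset ℤ} (C : Finset ℤ) (f : ℤ → ℤ → ℤ → ℂ) (hs : B ⊆ B')
    (h0 : ∀ k ∈ A, ∀ j ∈ B', j ∉ B → ∀ m ∈ C, f k j m = 0) : S3 A B C f = S3 A B' C f :=
  Finset.sum_congr rfl fun k hk => Finset.sum_subset hs fun j hj hj' =>
    Finset.sum_eq_zero fun m hm => h0 k hk j hj hj' m hm

lemma S3_split3 (A B : Finset ℤ) {a b c : ℤ} (hab : a ≤ b) (hbc : b ≤ c) (f : ℤ → ℤ → ℤ → ℂ) :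
    S3 A B (Finset.Ico a c) f = S3 A B (Finset.Ico a b) f + S3 A B (Finset.Ico b c) f := by
  unfold S3
  rw [← Finset.sum_add_distrib]
  refine Finset.sum_congr rfl fun k _ => ?_
  rw [← Finset.sum_add_distrib]
  refine Finset.sum_congr rfl fun j _ => ?_
  rw [← Finset.Ico_union_Ico_eq_Ico hab hbc,
    Finset.sum_union (Finset.Ico_disjoint_Ico_consecutive a b c)]

end JapAux
namespace JapAux

open Finset

/-- The core combinatorial cancellation. -/
lemma core (X Y Z : LaurentSp →ₗ[ℂ] LaurentSp)
    {M1 M2 M3 N1 N2 N3 : ℤ}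
    (hM1 : 0 ≤ M1) (hM12 : M1 ≤ M2) (hM23 : M2 ≤ M3)
    (hN1 : N1 ≤ 0) (hN21 : N2 ≤ N1) (hN32 : N3 ≤ N2)
    (hX1 : ∀ c, 0 ≤ c → c < M3 → ∀ r < N1, ent X r c = 0)
    (hY1 : ∀ c, 0 ≤ c → c < M3 → ∀ r < N1, ent Y r c = 0)
    (hZ1 : ∀ c, 0 ≤ c → c < M3 → ∀ r < N1, ent Z r c = 0)
    (hX2 : ∀ c, N1 ≤ c → c < 0 → ∀ r < N2, ent X r c = 0)
    (hY2 : ∀ c, N1 ≤ c → c < 0 → ∀ r < N2, ent Y r c = 0)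
    (hZ2 : ∀ c, N1 ≤ c → c < 0 → ∀ r < N2, ent Z r c = 0)
    (hX4 : ∀ r < 0, ∀ c, M1 ≤ c → ent X r c = 0)
    (hY4 : ∀ r < 0, ∀ c, M1 ≤ c → ent Y r c = 0)
    (hZ4 : ∀ r < 0, ∀ c, M1 ≤ c → ent Z r c = 0)
    (hX4' : ∀ r < M1, ∀ c, M2 ≤ c → ent X r c = 0)
    (hY4' : ∀ r < M1, ∀ c, M2 ≤ c → ent Y r c = 0)
    (hZ4' : ∀ r < M1, ∀ c, M2 ≤ c → ent Z r c = 0) :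
    S3 (Ico N2 0) (Ico 0 M2) (Ico N3 M3) (fun k j m => ent X k m * ent Y m j * ent Z j k)
    - S3 (Ico N2 0) (Ico 0 M2) (Ico N3 M3) (fun k j m => ent X j m * ent Y m k * ent Z k j)
    + S3 (Ico N2 0) (Ico 0 M2) (Ico N3 M3) (fun k j m => ent X j k * ent Y k m * ent Z m j)
    - S3 (Ico N2 0) (Ico 0 M2) (Ico N3 M3) (fun k j m => ent X k j * ent Y j m * ent Z m k)
    + S3 (Ico N2 0) (Ico 0 M2) (Ico N3 M3) (fun k j m => ent X m j * ent Y j k * ent Z k m)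
    - S3 (Ico N2 0) (Ico 0 M2) (Ico N3 M3) (fun k j m => ent X m k * ent Y k j * ent Z j m)
    = 0 := by
  have hN30 : N3 ≤ 0 := le_trans hN32 (le_trans hN21 hN1)
  have hN20 : N2 ≤ 0 := le_trans hN21 hN1
  have h0M3 : (0:ℤ) ≤ M3 := le_trans hM1 (le_trans hM12 hM23)
  have hKIn : Finset.Ico N2 (0:ℤ) ⊆ Finset.Ico N3 0 := Finset.Ico_subset_Ico hN32 le_rfl
  have hJIp : Finset.Ico (0:ℤ) M2 ⊆ Finset.Ico 0 M3 := Finset.Ico_subset_Ico le_rfl hM23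
  -- membership facts
  have memK : ∀ {k : ℤ}, k ∈ Finset.Ico N2 (0:ℤ) → N2 ≤ k ∧ k < 0 := fun h => Finset.mem_Ico.1 h
  have memJ : ∀ {j : ℤ}, j ∈ Finset.Ico (0:ℤ) M2 → 0 ≤ j ∧ j < M2 := fun h => Finset.mem_Ico.1 h
  have memIn : ∀ {m : ℤ}, m ∈ Finset.Ico N3 (0:ℤ) → N3 ≤ m ∧ m < 0 := fun h => Finset.mem_Ico.1 h
  have memIp : ∀ {m : ℤ}, m ∈ Finset.Ico (0:ℤ) M3 → 0 ≤ m ∧ m < M3 := fun h => Finset.mem_Ico.1 h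
  have hkK : ∀ {k : ℤ}, k ∈ Finset.Ico N3 (0:ℤ) → k ∉ Finset.Ico N2 0 → k < N2 := by
    intro k hk hk'
    have h1 := (Finset.mem_Ico.1 hk)
    by_contra hcon
    exact hk' (Finset.mem_Ico.2 ⟨not_lt.1 hcon, h1.2⟩)
  have hjJ : ∀ {j : ℤ}, j ∈ Finset.Ico (0:ℤ) M3 → j ∉ Finset.Ico (0:ℤ) M2 → M2 ≤ j := by
    intro j hj hj'
    have h1 := (Finset.mem_Ico.1 hj)
    by_contra hcon
    exact hj' (Finset.mem_Ico.2 ⟨h1.1, not_le.1 hcon⟩)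
  -- class 1 : negative m part, terms p1 and p6
  have c1 : S3 (Ico N2 0) (Ico 0 M2) (Ico N3 0) (fun k j m => ent X k m * ent Y m j * ent Z j k)
      = S3 (Ico N2 0) (Ico 0 M2) (Ico N3 0) (fun k j m => ent X m k * ent Y k j * ent Z j m) := by
    rw [S3_ext1 (A' := Ico N3 0) _ _ _ hKIn ?v1, S3_ext1 (A' := Ico N3 0) _ _ _ hKIn ?v2,
      S3_swap13]
    case v1 =>
      intro k hk hk' j hj m hm
      by_cases hy : ent Y m j = 0
      · rw [hy]; ring
      · have hm1 : N1 ≤ m := not_lt.1 fun hcon =>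
          hy (hY1 j (memJ hj).1 (lt_of_lt_of_le (memJ hj).2 hM23) m hcon)
        rw [hX2 m hm1 (memIn hm).2 k (hkK hk hk')]; ring
    case v2 =>
      intro k hk hk' j hj m hm
      rw [hY1 j (memJ hj).1 (lt_of_lt_of_le (memJ hj).2 hM23) k
        (lt_of_lt_of_le (hkK hk hk') hN21)]
      ring
  -- class 2 : negative m part, terms p2 and p3
  have c2 : S3 (Ico N2 0) (Ico 0 M2) (Ico N3 0) (fun k j m => ent X j m * ent Y m k * ent Z k j)
      = S3 (Ico N2 0) (Ico 0 M2) (Ico N3 0) (fun k j m => ent X j k * ent Y k m * ent Z m j) := by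
    rw [S3_ext1 (A' := Ico N3 0) _ _ _ hKIn ?v1, S3_ext1 (A' := Ico N3 0) _ _ _ hKIn ?v2,
      S3_swap13]
    case v1 =>
      intro k hk hk' j hj m hm
      rw [hZ1 j (memJ hj).1 (lt_of_lt_of_le (memJ hj).2 hM23) k
        (lt_of_lt_of_le (hkK hk hk') hN21)]
      ring
    case v2 =>
      intro k hk hk' j hj m hm
      by_cases hz : ent Z m j = 0
      · rw [hz]; ring
      · have hm1 : N1 ≤ m := not_lt.1 fun hcon =>
          hz (hZ1 j (memJ hj).1 (lt_of_lt_of_le (memJ hj).2 hM23) m hcon)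
        rw [hY2 m hm1 (memIn hm).2 k (hkK hk hk')]; ring
  -- class 3 : negative m part, terms p4 and p5
  have c3 : S3 (Ico N2 0) (Ico 0 M2) (Ico N3 0) (fun k j m => ent X k j * ent Y j m * ent Z m k)
      = S3 (Ico N2 0) (Ico 0 M2) (Ico N3 0) (fun k j m => ent X m j * ent Y j k * ent Z k m) := by
    rw [S3_ext1 (A' := Ico N3 0) _ _ _ hKIn ?v1, S3_ext1 (A' := Ico N3 0) _ _ _ hKIn ?v2,
      S3_swap13]
    case v1 =>
      intro k hk hk' j hj m hm
      rw [hX1 j (memJ hj).1 (lt_of_lt_of_le (memJ hj).2 hM23) k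
        (lt_of_lt_of_le (hkK hk hk') hN21)]
      ring
    case v2 =>
      intro k hk hk' j hj m hm
      by_cases hx : ent X m j = 0
      · rw [hx]; ring
      · have hm1 : N1 ≤ m := not_lt.1 fun hcon =>
          hx (hX1 j (memJ hj).1 (lt_of_lt_of_le (memJ hj).2 hM23) m hcon)
        rw [hZ2 m hm1 (memIn hm).2 k (hkK hk hk')]; ring
  -- class 4 : positive m part, terms p1 and p4
  have c4 : S3 (Ico N2 0) (Ico 0 M2) (Ico 0 M3) (fun k j m => ent X k m * ent Y m j * ent Z j k)
      = S3 (Ico N2 0) (Ico 0 M2) (Ico 0 M3) (fun k j m => ent X k j * ent Y j m * ent Z m k) := by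
    rw [S3_ext2 (B' := Ico 0 M3) _ _ _ hJIp ?v1, S3_ext2 (B' := Ico 0 M3) _ _ _ hJIp ?v2,
      S3_swap23]
    case v1 =>
      intro k hk j hj hj' m hm
      by_cases hx : ent X k m = 0
      · rw [hx]; ring
      · have hm1 : m < M1 := not_le.1 fun hcon => hx (hX4 k (memK hk).2 m hcon)
        rw [hY4' m hm1 j (hjJ hj hj')]; ring
    case v2 =>
      intro k hk j hj hj' m hm
      rw [hX4 k (memK hk).2 j (le_trans hM12 (hjJ hj hj'))]; ring
  -- class 5 : positive m part, terms p2 and p5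
  have c5 : S3 (Ico N2 0) (Ico 0 M2) (Ico 0 M3) (fun k j m => ent X j m * ent Y m k * ent Z k j)
      = S3 (Ico N2 0) (Ico 0 M2) (Ico 0 M3) (fun k j m => ent X m j * ent Y j k * ent Z k m) := by
    rw [S3_ext2 (B' := Ico 0 M3) _ _ _ hJIp ?v1, S3_ext2 (B' := Ico 0 M3) _ _ _ hJIp ?v2,
      S3_swap23]
    case v1 =>
      intro k hk j hj hj' m hm
      rw [hZ4 k (memK hk).2 j (le_trans hM12 (hjJ hj hj'))]; ring
    case v2 =>
      intro k hk j hj hj' m hm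
      by_cases hz : ent Z k m = 0
      · rw [hz]; ring
      · have hm1 : m < M1 := not_le.1 fun hcon => hz (hZ4 k (memK hk).2 m hcon)
        rw [hX4' m hm1 j (hjJ hj hj')]; ring
  -- class 6 : positive m part, terms p3 and p6
  have c6 : S3 (Ico N2 0) (Ico 0 M2) (Ico 0 M3) (fun k j m => ent X j k * ent Y k m * ent Z m j)
      = S3 (Ico N2 0) (Ico 0 M2) (Ico 0 M3) (fun k j m => ent X m k * ent Y k j * ent Z j m) := by
    rw [S3_ext2 (B' := Ico 0 M3) _ _ _ hJIp ?v1, S3_ext2 (B' := Ico 0 M3) _ _ _ hJIp ?v2,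
      S3_swap23]
    case v1 =>
      intro k hk j hj hj' m hm
      by_cases hy : ent Y k m = 0
      · rw [hy]; ring
      · have hm1 : m < M1 := not_le.1 fun hcon => hy (hY4 k (memK hk).2 m hcon)
        rw [hZ4' m hm1 j (hjJ hj hj')]; ring
    case v2 =>
      intro k hk j hj hj' m hm
      rw [hY4 k (memK hk).2 j (le_trans hM12 (hjJ hj hj'))]; ring
  rw [S3_split3 _ _ hN30 h0M3, S3_split3 _ _ hN30 h0M3, S3_split3 _ _ hN30 h0M3,
    S3_split3 _ _ hN30 h0M3, S3_split3 _ _ hN30 h0M3, S3_split3 _ _ hN30 h0M3]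
  linear_combination c1 - c2 - c3 + c4 - c5 + c6
end JapAux
namespace JapAux

open Finset

lemma entBr (P Q : LaurentSp →ₗ[ℂ] LaurentSp) (r c : ℤ) :
    ent (P ∘ₗ Q - Q ∘ₗ P) r c = coef (P (Q (lX c))) r - coef (Q (P (lX c))) r := rfl

lemma jacobi (F G E : LaurentSp →ₗ[ℂ] LaurentSp) (hF : XadicContinuous F)
    (hG : XadicContinuous G) (hE : XadicContinuous E) :
    jap (F ∘ₗ G - G ∘ₗ F) E + jap (G ∘ₗ E - E ∘ₗ G) F + jap (E ∘ₗ F - F ∘ₗ E) G = 0 := by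
  have hA1 : XadicContinuous (F ∘ₗ G - G ∘ₗ F) := xc_sub (xc_comp hF hG) (xc_comp hG hF)
  have hA2 : XadicContinuous (G ∘ₗ E - E ∘ₗ G) := xc_sub (xc_comp hG hE) (xc_comp hE hG)
  have hA3 : XadicContinuous (E ∘ₗ F - F ∘ₗ E) := xc_sub (xc_comp hE hF) (xc_comp hF hE)
  obtain ⟨Ma, hMa0, hMa⟩ := japSummand_eq _ E hA1 hE
  obtain ⟨Mb, hMb0, hMb⟩ := japSummand_eq _ F hA2 hF
  obtain ⟨Mc, hMc0, hMc⟩ := japSummand_eq _ G hA3 hG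
  obtain ⟨MF0, hF0, -⟩ := expand F hF 0
  obtain ⟨MG0, hG0, -⟩ := expand G hG 0
  obtain ⟨ME0, hE0, -⟩ := expand E hE 0
  obtain ⟨M1, hM1⟩ : ∃ M1 : ℤ, 0 ≤ M1 ∧ Ma ≤ M1 ∧ Mb ≤ M1 ∧ Mc ≤ M1 ∧ MF0 ≤ M1 ∧
      MG0 ≤ M1 ∧ ME0 ≤ M1 :=
    ⟨max 0 (max Ma (max Mb (max Mc (max MF0 (max MG0 ME0))))), by omega⟩
  obtain ⟨MF1, hF1, -⟩ := expand F hF M1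
  obtain ⟨MG1, hG1, -⟩ := expand G hG M1
  obtain ⟨ME1, hE1, -⟩ := expand E hE M1
  obtain ⟨M2, hM2⟩ : ∃ M2 : ℤ, M1 ≤ M2 ∧ MF1 ≤ M2 ∧ MG1 ≤ M2 ∧ ME1 ≤ M2 :=
    ⟨max M1 (max MF1 (max MG1 ME1)), by omega⟩
  obtain ⟨MF2, hF2v, hF2e⟩ := expand F hF M2
  obtain ⟨MG2, hG2v, hG2e⟩ := expand G hG M2
  obtain ⟨ME2, hE2v, hE2e⟩ := expand E hE M2
  obtain ⟨M3, hM3⟩ : ∃ M3 : ℤ, M2 ≤ M3 ∧ MF2 ≤ M3 ∧ MG2 ≤ M3 ∧ ME2 ≤ M3 :=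
    ⟨max M2 (max MF2 (max MG2 ME2)), by omega⟩
  obtain ⟨Nb1, hNb1z, hNb1⟩ := colBound (F ∘ₗ G - G ∘ₗ F) (Finset.Ico 0 M3)
  obtain ⟨Nb2, hNb2z, hNb2⟩ := colBound (G ∘ₗ E - E ∘ₗ G) (Finset.Ico 0 M3)
  obtain ⟨Nb3, hNb3z, hNb3⟩ := colBound (E ∘ₗ F - F ∘ₗ E) (Finset.Ico 0 M3)
  obtain ⟨NbF, hNbFz, hNbF⟩ := colBound F (Finset.Ico 0 M3)
  obtain ⟨NbG, hNbGz, hNbG⟩ := colBound G (Finset.Ico 0 M3)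
  obtain ⟨NbE, hNbEz, hNbE⟩ := colBound E (Finset.Ico 0 M3)
  obtain ⟨N1, hN1⟩ : ∃ N1 : ℤ, N1 ≤ 0 ∧ N1 ≤ Nb1 ∧ N1 ≤ Nb2 ∧ N1 ≤ Nb3 ∧ N1 ≤ NbF ∧
      N1 ≤ NbG ∧ N1 ≤ NbE :=
    ⟨min Nb1 (min Nb2 (min Nb3 (min NbF (min NbG NbE)))), by omega⟩
  obtain ⟨NcF, hNcFz, hNcF⟩ := colBound F (Finset.Ico N1 M3)
  obtain ⟨NcG, hNcGz, hNcG⟩ := colBound G (Finset.Ico N1 M3)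
  obtain ⟨NcE, hNcEz, hNcE⟩ := colBound E (Finset.Ico N1 M3)
  obtain ⟨N2, hN2⟩ : ∃ N2 : ℤ, N2 ≤ N1 ∧ N2 ≤ NcF ∧ N2 ≤ NcG ∧ N2 ≤ NcE :=
    ⟨min N1 (min NcF (min NcG NcE)), by omega⟩
  obtain ⟨NdF, hNdFz, hNdF⟩ := colBound F (Finset.Ico N2 M3)
  obtain ⟨NdG, hNdGz, hNdG⟩ := colBound G (Finset.Ico N2 M3)
  obtain ⟨NdE, hNdEz, hNdE⟩ := colBound E (Finset.Ico N2 M3)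
  obtain ⟨N3, hN3⟩ : ∃ N3 : ℤ, N3 ≤ N2 ∧ N3 ≤ NdF ∧ N3 ≤ NdG ∧ N3 ≤ NdE :=
    ⟨min N2 (min NdF (min NdG NdE)), by omega⟩
  -- the three japs as double sums
  have hj1 : jap (F ∘ₗ G - G ∘ₗ F) E = ∑ k ∈ Finset.Ico N2 0, ∑ j ∈ Finset.Ico (0:ℤ) M2,
      (ent E j k * ent (F ∘ₗ G - G ∘ₗ F) k j - ent (F ∘ₗ G - G ∘ₗ F) j k * ent E k j) :=
    jap_eq _ _ (by omega) (fun k hk => hMa M2 (by omega) k hk)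
      (fun k hk j hj => by
        have hj' : j ∈ Finset.Ico (0:ℤ) M3 :=
          Finset.mem_Ico.2 ⟨(Finset.mem_Ico.1 hj).1, by have := (Finset.mem_Ico.1 hj).2; omega⟩
        exact ⟨hNb1 j hj' k (by omega), hNbE j hj' k (by omega)⟩)
  have hj2 : jap (G ∘ₗ E - E ∘ₗ G) F = ∑ k ∈ Finset.Ico N2 0, ∑ j ∈ Finset.Ico (0:ℤ) M2,
      (ent F j k * ent (G ∘ₗ E - E ∘ₗ G) k j - ent (G ∘ₗ E - E ∘ₗ G) j k * ent F k j) :=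
    jap_eq _ _ (by omega) (fun k hk => hMb M2 (by omega) k hk)
      (fun k hk j hj => by
        have hj' : j ∈ Finset.Ico (0:ℤ) M3 :=
          Finset.mem_Ico.2 ⟨(Finset.mem_Ico.1 hj).1, by have := (Finset.mem_Ico.1 hj).2; omega⟩
        exact ⟨hNb2 j hj' k (by omega), hNbF j hj' k (by omega)⟩)
  have hj3 : jap (E ∘ₗ F - F ∘ₗ E) G = ∑ k ∈ Finset.Ico N2 0, ∑ j ∈ Finset.Ico (0:ℤ) M2,
      (ent G j k * ent (E ∘ₗ F - F ∘ₗ E) k j - ent (E ∘ₗ F - F ∘ₗ E) j k * ent G k j) :=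
    jap_eq _ _ (by omega) (fun k hk => hMc M2 (by omega) k hk)
      (fun k hk j hj => by
        have hj' : j ∈ Finset.Ico (0:ℤ) M3 :=
          Finset.mem_Ico.2 ⟨(Finset.mem_Ico.1 hj).1, by have := (Finset.mem_Ico.1 hj).2; omega⟩
        exact ⟨hNb3 j hj' k (by omega), hNbG j hj' k (by omega)⟩)
  -- expansions of the bracket entries
  have hentA1 : ∀ r, r < M2 → ∀ c, N2 ≤ c → c < M2 →
      ent (F ∘ₗ G - G ∘ₗ F) r c
        = ∑ m ∈ Finset.Ico N3 M3, (ent G m c * ent F r m - ent F m c * ent G r m) := by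
    intro r hr c hc1 hc2
    have hcmem : c ∈ Finset.Ico N2 M3 := Finset.mem_Ico.2 ⟨hc1, by omega⟩
    have e1 : coef (F (G (lX c))) r = ∑ m ∈ Finset.Ico N3 M3, ent G m c * ent F r m :=
      hF2e N3 M3 (by omega) (by omega) (G (lX c)) (fun j hj => hNdG c hcmem j (by omega)) r hr
    have e2 : coef (G (F (lX c))) r = ∑ m ∈ Finset.Ico N3 M3, ent F m c * ent G r m :=
      hG2e N3 M3 (by omega) (by omega) (F (lX c)) (fun j hj => hNdF c hcmem j (by omega)) r hr
    rw [entBr F G r c, e1, e2, ← Finset.sum_sub_distrib]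
  have hentA2 : ∀ r, r < M2 → ∀ c, N2 ≤ c → c < M2 →
      ent (G ∘ₗ E - E ∘ₗ G) r c
        = ∑ m ∈ Finset.Ico N3 M3, (ent E m c * ent G r m - ent G m c * ent E r m) := by
    intro r hr c hc1 hc2
    have hcmem : c ∈ Finset.Ico N2 M3 := Finset.mem_Ico.2 ⟨hc1, by omega⟩
    have e1 : coef (G (E (lX c))) r = ∑ m ∈ Finset.Ico N3 M3, ent E m c * ent G r m :=
      hG2e N3 M3 (by omega) (by omega) (E (lX c)) (fun j hj => hNdE c hcmem j (by omega)) r hr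
    have e2 : coef (E (G (lX c))) r = ∑ m ∈ Finset.Ico N3 M3, ent G m c * ent E r m :=
      hE2e N3 M3 (by omega) (by omega) (G (lX c)) (fun j hj => hNdG c hcmem j (by omega)) r hr
    rw [entBr G E r c, e1, e2, ← Finset.sum_sub_distrib]
  have hentA3 : ∀ r, r < M2 → ∀ c, N2 ≤ c → c < M2 →
      ent (E ∘ₗ F - F ∘ₗ E) r c
        = ∑ m ∈ Finset.Ico N3 M3, (ent F m c * ent E r m - ent E m c * ent F r m) := by
    intro r hr c hc1 hc2
    have hcmem : c ∈ Finset.Ico N2 M3 := Finset.mem_Ico.2 ⟨hc1, by omega⟩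
    have e1 : coef (E (F (lX c))) r = ∑ m ∈ Finset.Ico N3 M3, ent F m c * ent E r m :=
      hE2e N3 M3 (by omega) (by omega) (F (lX c)) (fun j hj => hNdF c hcmem j (by omega)) r hr
    have e2 : coef (F (E (lX c))) r = ∑ m ∈ Finset.Ico N3 M3, ent E m c * ent F r m :=
      hF2e N3 M3 (by omega) (by omega) (E (lX c)) (fun j hj => hNdE c hcmem j (by omega)) r hr
    rw [entBr E F r c, e1, e2, ← Finset.sum_sub_distrib]
  -- japs as triple sums
  have h1 : jap (F ∘ₗ G - G ∘ₗ F) E = S3 (Ico N2 0) (Ico 0 M2) (Ico N3 M3)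
      (fun k j m => ent E j k * (ent G m j * ent F k m - ent F m j * ent G k m)
        - (ent G m k * ent F j m - ent F m k * ent G j m) * ent E k j) := by
    rw [hj1]
    refine Finset.sum_congr rfl fun k hk => Finset.sum_congr rfl fun j hj => ?_
    obtain ⟨hk1, hk2⟩ := Finset.mem_Ico.1 hk
    obtain ⟨hja, hjb⟩ := Finset.mem_Ico.1 hj
    rw [hentA1 k (by omega) j (by omega) hjb, hentA1 j (by omega) k (by omega) (by omega),
      Finset.mul_sum, Finset.sum_mul, ← Finset.sum_sub_distrib]
  have h2 : jap (G ∘ₗ E - E ∘ₗ G) F = S3 (Ico N2 0) (Ico 0 M2) (Ico N3 M3)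
      (fun k j m => ent F j k * (ent E m j * ent G k m - ent G m j * ent E k m)
        - (ent E m k * ent G j m - ent G m k * ent E j m) * ent F k j) := by
    rw [hj2]
    refine Finset.sum_congr rfl fun k hk => Finset.sum_congr rfl fun j hj => ?_
    obtain ⟨hk1, hk2⟩ := Finset.mem_Ico.1 hk
    obtain ⟨hja, hjb⟩ := Finset.mem_Ico.1 hj
    rw [hentA2 k (by omega) j (by omega) hjb, hentA2 j (by omega) k (by omega) (by omega),
      Finset.mul_sum, Finset.sum_mul, ← Finset.sum_sub_distrib]
  have h3 : jap (E ∘ₗ F - F ∘ₗ E) G = S3 (Ico N2 0) (Ico 0 M2) (Ico N3 M3)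
      (fun k j m => ent G j k * (ent F m j * ent E k m - ent E m j * ent F k m)
        - (ent F m k * ent E j m - ent E m k * ent F j m) * ent G k j) := by
    rw [hj3]
    refine Finset.sum_congr rfl fun k hk => Finset.sum_congr rfl fun j hj => ?_
    obtain ⟨hk1, hk2⟩ := Finset.mem_Ico.1 hk
    obtain ⟨hja, hjb⟩ := Finset.mem_Ico.1 hj
    rw [hentA3 k (by omega) j (by omega) hjb, hentA3 j (by omega) k (by omega) (by omega),
      Finset.mul_sum, Finset.sum_mul, ← Finset.sum_sub_distrib]
  -- decompositions into the twelve canonical triple sums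
  have d1 : S3 (Ico N2 0) (Ico 0 M2) (Ico N3 M3)
      (fun k j m => ent E j k * (ent G m j * ent F k m - ent F m j * ent G k m)
        - (ent G m k * ent F j m - ent F m k * ent G j m) * ent E k j)
      = S3 (Ico N2 0) (Ico 0 M2) (Ico N3 M3) (fun k j m => ent F k m * ent G m j * ent E j k)
      - S3 (Ico N2 0) (Ico 0 M2) (Ico N3 M3) (fun k j m => ent G k m * ent F m j * ent E j k)
      - S3 (Ico N2 0) (Ico 0 M2) (Ico N3 M3) (fun k j m => ent F j m * ent G m k * ent E k j)
      + S3 (Ico N2 0) (Ico 0 M2) (Ico N3 M3) (fun k j m => ent G j m * ent F m k * ent E k j) := by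
    simp only [S3, ← Finset.sum_sub_distrib, ← Finset.sum_add_distrib]
    exact Finset.sum_congr rfl fun k _ => Finset.sum_congr rfl fun j _ =>
      Finset.sum_congr rfl fun m _ => by ring
  have d2 : S3 (Ico N2 0) (Ico 0 M2) (Ico N3 M3)
      (fun k j m => ent F j k * (ent E m j * ent G k m - ent G m j * ent E k m)
        - (ent E m k * ent G j m - ent G m k * ent E j m) * ent F k j)
      = S3 (Ico N2 0) (Ico 0 M2) (Ico N3 M3) (fun k j m => ent F j k * ent G k m * ent E m j)
      - S3 (Ico N2 0) (Ico 0 M2) (Ico N3 M3) (fun k j m => ent G m j * ent F j k * ent E k m)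
      - S3 (Ico N2 0) (Ico 0 M2) (Ico N3 M3) (fun k j m => ent F k j * ent G j m * ent E m k)
      + S3 (Ico N2 0) (Ico 0 M2) (Ico N3 M3) (fun k j m => ent G m k * ent F k j * ent E j m) := by
    simp only [S3, ← Finset.sum_sub_distrib, ← Finset.sum_add_distrib]
    exact Finset.sum_congr rfl fun k _ => Finset.sum_congr rfl fun j _ =>
      Finset.sum_congr rfl fun m _ => by ring
  have d3 : S3 (Ico N2 0) (Ico 0 M2) (Ico N3 M3)
      (fun k j m => ent G j k * (ent F m j * ent E k m - ent E m j * ent F k m)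
        - (ent F m k * ent E j m - ent E m k * ent F j m) * ent G k j)
      = S3 (Ico N2 0) (Ico 0 M2) (Ico N3 M3) (fun k j m => ent F m j * ent G j k * ent E k m)
      - S3 (Ico N2 0) (Ico 0 M2) (Ico N3 M3) (fun k j m => ent G j k * ent F k m * ent E m j)
      - S3 (Ico N2 0) (Ico 0 M2) (Ico N3 M3) (fun k j m => ent F m k * ent G k j * ent E j m)
      + S3 (Ico N2 0) (Ico 0 M2) (Ico N3 M3) (fun k j m => ent G k j * ent F j m * ent E m k) := by
    simp only [S3, ← Finset.sum_sub_distrib, ← Finset.sum_add_distrib]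
    exact Finset.sum_congr rfl fun k _ => Finset.sum_congr rfl fun j _ =>
      Finset.sum_congr rfl fun m _ => by ring
  -- vanishing hypotheses for the core lemma
  have zF1 : ∀ c, 0 ≤ c → c < M3 → ∀ r < N1, ent F r c = 0 :=
    fun c h1 h2 r hr => hNbF c (Finset.mem_Ico.2 ⟨h1, h2⟩) r (by omega)
  have zG1 : ∀ c, 0 ≤ c → c < M3 → ∀ r < N1, ent G r c = 0 :=
    fun c h1 h2 r hr => hNbG c (Finset.mem_Ico.2 ⟨h1, h2⟩) r (by omega)
  have zE1 : ∀ c, 0 ≤ c → c < M3 → ∀ r < N1, ent E r c = 0 :=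
    fun c h1 h2 r hr => hNbE c (Finset.mem_Ico.2 ⟨h1, h2⟩) r (by omega)
  have zF2 : ∀ c, N1 ≤ c → c < 0 → ∀ r < N2, ent F r c = 0 :=
    fun c h1 h2 r hr => hNcF c (Finset.mem_Ico.2 ⟨h1, by omega⟩) r (by omega)
  have zG2 : ∀ c, N1 ≤ c → c < 0 → ∀ r < N2, ent G r c = 0 :=
    fun c h1 h2 r hr => hNcG c (Finset.mem_Ico.2 ⟨h1, by omega⟩) r (by omega)
  have zE2 : ∀ c, N1 ≤ c → c < 0 → ∀ r < N2, ent E r c = 0 :=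
    fun c h1 h2 r hr => hNcE c (Finset.mem_Ico.2 ⟨h1, by omega⟩) r (by omega)
  have zF4 : ∀ r < (0:ℤ), ∀ c, M1 ≤ c → ent F r c = 0 :=
    fun r hr c hc => hF0 r hr c (by omega)
  have zG4 : ∀ r < (0:ℤ), ∀ c, M1 ≤ c → ent G r c = 0 :=
    fun r hr c hc => hG0 r hr c (by omega)
  have zE4 : ∀ r < (0:ℤ), ∀ c, M1 ≤ c → ent E r c = 0 :=
    fun r hr c hc => hE0 r hr c (by omega)
  have zF4' : ∀ r < M1, ∀ c, M2 ≤ c → ent F r c = 0 :=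
    fun r hr c hc => hF1 r hr c (by omega)
  have zG4' : ∀ r < M1, ∀ c, M2 ≤ c → ent G r c = 0 :=
    fun r hr c hc => hG1 r hr c (by omega)
  have zE4' : ∀ r < M1, ∀ c, M2 ≤ c → ent E r c = 0 :=
    fun r hr c hc => hE1 r hr c (by omega)
  have coreP := core F G E (M1 := M1) (M2 := M2) (M3 := M3) (N1 := N1) (N2 := N2) (N3 := N3) (by omega) (by omega) (by omega) (by omega) (by omega) (by omega)
    zF1 zG1 zE1 zF2 zG2 zE2 zF4 zG4 zE4 zF4' zG4' zE4'
  have coreQ := core G F E (M1 := M1) (M2 := M2) (M3 := M3) (N1 := N1) (N2 := N2) (N3 := N3) (by omega) (by omega) (by omega) (by omega) (by omega) (by omega)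
    zG1 zF1 zE1 zG2 zF2 zE2 zG4 zF4 zE4 zG4' zF4' zE4'
  rw [h1, h2, h3, d1, d2, d3]
  linear_combination coreP - coreQ

end JapAux
/-- (a) For continuous `ℂ`-linear endomorphisms `F, G` of `H = ℂ((X))` the family of
diagonal entries defining `η(F,G)` is finitely supported, so `η(F,G)` is well defined;
(b) `η` is a 2-cocycle on the Lie algebra of continuous endomorphisms:
`η(F,G) = −η(G,F)` and `η([F,G],E) + η([G,E],F) + η([E,F],G) = 0`.
Consequently `[F,G]~ = [F,G] + η(F,G)·C` defines a Lie algebra structure on `𝔤𝔩 ⊕ ℂC`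
(the bracket is alternating and satisfies the Jacobi identity). -/
theorem japanese_cocycle :
    (∀ F G : LaurentSp →ₗ[ℂ] LaurentSp, XadicContinuous F → XadicContinuous G →
      (Function.support (japSummand F G)).Finite) ∧
    (∀ F G : LaurentSp →ₗ[ℂ] LaurentSp, XadicContinuous F → XadicContinuous G →
      jap F G = -jap G F) ∧
    (∀ F G E : LaurentSp →ₗ[ℂ] LaurentSp,
      XadicContinuous F → XadicContinuous G → XadicContinuous E →
      jap (F ∘ₗ G - G ∘ₗ F) E + jap (G ∘ₗ E - E ∘ₗ G) F + jap (E ∘ₗ F - F ∘ₗ E) G = 0) ∧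
    (∀ p : (LaurentSp →ₗ[ℂ] LaurentSp) × ℂ, glTildeBracket p p = 0) ∧
    (∀ p q r : (LaurentSp →ₗ[ℂ] LaurentSp) × ℂ,
      XadicContinuous p.1 → XadicContinuous q.1 → XadicContinuous r.1 →
      glTildeBracket (glTildeBracket p q) r + glTildeBracket (glTildeBracket q r) p +
        glTildeBracket (glTildeBracket r p) q = 0) := by
  have hskew : ∀ F G : LaurentSp →ₗ[ℂ] LaurentSp, ∀ k : ℤ,
      japSummand G F k = -japSummand F G k := by
    intro F G k
    unfold japSummand
    split_ifs with h
    · ring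
    · simp
  refine ⟨?_, ?_, JapAux.jacobi, ?_, ?_⟩
  · -- (a) finite support
    intro F G hF hG
    obtain ⟨M0, hM00, hform⟩ := JapAux.japSummand_eq F G hF hG
    obtain ⟨NF, hNFz, hNF⟩ := JapAux.colBound F (Finset.Ico 0 M0)
    obtain ⟨NG, hNGz, hNG⟩ := JapAux.colBound G (Finset.Ico 0 M0)
    apply Set.Finite.subset (Finset.Ico (min NF NG) 0).finite_toSet
    intro k hk
    simp only [Finset.coe_Ico, Set.mem_Ico]
    by_contra hc
    push_neg at hc
    apply hk
    rcases lt_or_ge k 0 with h | h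
    · have hkN : k < min NF NG := lt_of_not_ge fun hle => absurd (hc hle) (not_le.2 h)
      rw [hform M0 le_rfl k h]
      refine Finset.sum_eq_zero fun j hj => ?_
      rw [hNF j hj k (by omega), hNG j hj k (by omega)]
      ring
    · exact if_neg (not_lt.2 h)
  · -- (b) antisymmetry
    intro F G hF hG
    have : jap G F = -jap F G := by
      rw [jap, finsum_congr (hskew F G), finsum_neg_distrib]
      rfl
    rw [this, neg_neg]
  · -- (d) alternating
    intro p
    have h2 : jap p.1 p.1 = 0 := by
      have hz : ∀ k : ℤ, japSummand p.1 p.1 k = 0 := by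
        intro k
        unfold japSummand
        split_ifs with h
        · ring
        · rfl
      rw [jap, finsum_congr hz, finsum_zero]
    rw [Prod.ext_iff]
    constructor
    · show p.1 ∘ₗ p.1 - p.1 ∘ₗ p.1 = 0
      exact sub_self (p.1 ∘ₗ p.1)
    · show jap p.1 p.1 = 0
      exact h2
  · -- (e) Jacobi for the central extension
    intro p q r hp hq hr
    have jc := JapAux.jacobi p.1 q.1 r.1 hp hq hr
    rw [Prod.ext_iff]
    constructor
    · show ((p.1 ∘ₗ q.1 - q.1 ∘ₗ p.1) ∘ₗ r.1 - r.1 ∘ₗ (p.1 ∘ₗ q.1 - q.1 ∘ₗ p.1))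
        + ((q.1 ∘ₗ r.1 - r.1 ∘ₗ q.1) ∘ₗ p.1 - p.1 ∘ₗ (q.1 ∘ₗ r.1 - r.1 ∘ₗ q.1))
        + ((r.1 ∘ₗ p.1 - p.1 ∘ₗ r.1) ∘ₗ q.1 - q.1 ∘ₗ (r.1 ∘ₗ p.1 - p.1 ∘ₗ r.1)) = 0
      ext x
      simp only [LinearMap.add_apply, LinearMap.sub_apply, LinearMap.comp_apply, map_sub,
        LinearMap.zero_apply]
      abel
    · show jap (p.1 ∘ₗ q.1 - q.1 ∘ₗ p.1) r.1 + jap (q.1 ∘ₗ r.1 - r.1 ∘ₗ q.1) p.1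
        + jap (r.1 ∘ₗ p.1 - p.1 ∘ₗ r.1) q.1 = 0
      exact jc
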